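/- Let X be a finite-dimensional real normed space, let x be a unit vector admitting an outer ellipsoid, and let y be a unit vector admitting an inner ellipsoid. Then there exists a contractive automorphism T of X with T x = y. -/

import Mathlib

/-- `x` admits an inner ellipsoid. -/
def InnerEllipsoidAt (X : Type*) [NormedAddCommGroup X] [NormedSpace ℝ X] (x : X) : Prop :=
  ∃ B : LinearMap.BilinForm ℝ X, (∀ z w : X, B z w = B w z) ∧
    (∀ z : X, ‖z‖ ^ 2 ≤ B z z) ∧ B x x = 1

/-- `x` admits an outer ellipsoid. -/
def OuterEllipsoidAt (X : Type*) [NormedAddCommGroup X] [NormedSpace ℝ X] (x : X) : Prop :=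
  ∃ B : LinearMap.BilinForm ℝ X, (∀ z w : X, B z w = B w z) ∧
    (∀ z : X, z ≠ 0 → 0 < B z z) ∧ (∀ z : X, B z z ≤ ‖z‖ ^ 2) ∧ B x x = 1

open LinearMap (BilinForm)

section Aux

variable {X : Type*} [AddCommGroup X] [Module ℝ X]

/-- Type synonym carrying an inner product built from a bilinear form. -/
def Sp (_B : BilinForm ℝ X) : Type _ := X

variable (B : BilinForm ℝ X)

instance : AddCommGroup (Sp B) := inferInstanceAs (AddCommGroup X)
instance : Module ℝ (Sp B) := inferInstanceAs (Module ℝ X)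

/-- The tautological linear equivalence `X ≃ₗ[ℝ] Sp B`. -/
def Sp.mk : X ≃ₗ[ℝ] Sp B := LinearEquiv.refl ℝ X

/-- The inner product space core on `Sp B` coming from a symmetric positive definite form. -/
noncomputable def Sp.core (hs : ∀ z w : X, B z w = B w z)
    (hp : ∀ z : X, z ≠ 0 → 0 < B z z) : InnerProductSpace.Core ℝ (Sp B) where
  inner z w := B z w
  conj_inner_symm z w := by simpa using hs w z
  re_inner_nonneg z := by
    rcases eq_or_ne (z : X) 0 with h | h
    · simp [h]; exact (LinearMap.map_zero₂ B 0).symm.le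
    · simpa using (hp z h).le
  add_left z w u := by exact LinearMap.map_add₂ B z w u
  smul_left z w r := by exact LinearMap.map_smul₂ B r z w
  definite z h := by
    by_contra hne
    exact (hp z hne).ne' (by simpa using h)

theorem keyLemma [Module.Finite ℝ X] (B₁ B₂ : BilinForm ℝ X)
    (hs₁ : ∀ z w : X, B₁ z w = B₁ w z) (hp₁ : ∀ z : X, z ≠ 0 → 0 < B₁ z z)
    (hs₂ : ∀ z w : X, B₂ z w = B₂ w z) (hp₂ : ∀ z : X, z ≠ 0 → 0 < B₂ z z)
    (u v : X) (hu : B₁ u u = 1) (hv : B₂ v v = 1) :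
    ∃ T : X ≃ₗ[ℝ] X, (∀ z : X, B₂ (T z) (T z) = B₁ z z) ∧ T u = v := by
  letI n₁ : NormedAddCommGroup (Sp B₁) := (Sp.core B₁ hs₁ hp₁).toNormedAddCommGroup
  letI i₁ : InnerProductSpace ℝ (Sp B₁) := InnerProductSpace.ofCore _
  letI n₂ : NormedAddCommGroup (Sp B₂) := (Sp.core B₂ hs₂ hp₂).toNormedAddCommGroup
  letI i₂ : InnerProductSpace ℝ (Sp B₂) := InnerProductSpace.ofCore _
  haveI : FiniteDimensional ℝ (Sp B₁) := Module.Finite.equiv (Sp.mk B₁)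
  haveI : FiniteDimensional ℝ (Sp B₂) := Module.Finite.equiv (Sp.mk B₂)
  have key₁ : ∀ z : Sp B₁, B₁ z z = ‖z‖ ^ 2 := by
    intro z
    have h : (inner ℝ z z : ℝ) = B₁ z z := rfl
    rw [← h, real_inner_self_eq_norm_sq]
  have key₂ : ∀ z : Sp B₂, B₂ z z = ‖z‖ ^ 2 := by
    intro z
    have h : (inner ℝ z z : ℝ) = B₂ z z := rfl
    rw [← h, real_inner_self_eq_norm_sq]
  have hdim : Module.finrank ℝ (Sp B₁) = Module.finrank ℝ (Sp B₂) :=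
    ((Sp.mk B₁).symm.finrank_eq).trans ((Sp.mk B₂).finrank_eq)
  let S : Sp B₁ ≃ₗᵢ[ℝ] Sp B₂ :=
    (stdOrthonormalBasis ℝ (Sp B₁)).repr.trans
      (((stdOrthonormalBasis ℝ (Sp B₂)).reindex (finCongr hdim.symm)).repr).symm
  set u' : Sp B₁ := Sp.mk B₁ u with hu'def
  set v' : Sp B₂ := Sp.mk B₂ v with hv'def
  have hnu : ‖u'‖ = 1 := by
    have h : ‖u'‖ ^ 2 = 1 := by rw [← key₁ u']; exact hu
    nlinarith [norm_nonneg u']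
  have hnv : ‖v'‖ = 1 := by
    have h : ‖v'‖ ^ 2 = 1 := by rw [← key₂ v']; exact hv
    nlinarith [norm_nonneg v']
  have hnorm : ‖S u'‖ = ‖v'‖ := by rw [S.norm_map, hnu, hnv]
  let R : Sp B₂ ≃ₗᵢ[ℝ] Sp B₂ := Submodule.reflection (ℝ ∙ ((S u') - v'))ᗮ
  have hR : R (S u') = v' := Submodule.reflection_sub hnorm
  refine ⟨(Sp.mk B₁).trans (S.toLinearEquiv.trans
    (R.toLinearEquiv.trans (Sp.mk B₂).symm)), ?_, ?_⟩
  · intro z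
    have h1 : B₂ (R (S (Sp.mk B₁ z))) (R (S (Sp.mk B₁ z))) = ‖R (S (Sp.mk B₁ z))‖ ^ 2 := key₂ _
    have h2 : ‖R (S (Sp.mk B₁ z))‖ = ‖Sp.mk B₁ z‖ := by rw [R.norm_map, S.norm_map]
    have h3 : B₁ z z = ‖Sp.mk B₁ z‖ ^ 2 := key₁ (Sp.mk B₁ z)
    show B₂ (R (S (Sp.mk B₁ z))) (R (S (Sp.mk B₁ z))) = B₁ z z
    rw [h1, h2, h3]
  · show ((Sp.mk B₂).symm (R (S (Sp.mk B₁ u))) : X) = v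
    rw [hR]
    rfl

end Aux

/-- If `x` is a unit vector admitting an outer ellipsoid and `y` a unit vector admitting an
inner ellipsoid, then some contractive automorphism sends `x` to `y`. -/
theorem stmt6 (X : Type*) [NormedAddCommGroup X] [NormedSpace ℝ X] [FiniteDimensional ℝ X]
    (x y : X) (hx : ‖x‖ = 1) (hy : ‖y‖ = 1)
    (hox : OuterEllipsoidAt X x) (hiy : InnerEllipsoidAt X y) :
    ∃ T : X ≃L[ℝ] X, ‖(T : X →L[ℝ] X)‖ ≤ 1 ∧ T x = y := by
  obtain ⟨B₁, hs₁, hp₁, hle₁, hB₁x⟩ := hox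
  obtain ⟨B₂, hs₂, hge₂, hB₂y⟩ := hiy
  have hp₂ : ∀ z : X, z ≠ 0 → 0 < B₂ z z := fun z hz =>
    lt_of_lt_of_le (pow_pos (norm_pos_iff.mpr hz) 2) (hge₂ z)
  obtain ⟨T, hT, hTx⟩ := keyLemma B₁ B₂ hs₁ hp₁ hs₂ hp₂ x y hB₁x hB₂y
  have hcontr : ∀ z : X, ‖T z‖ ≤ ‖z‖ := by
    intro z
    have h1 : ‖T z‖ ^ 2 ≤ B₂ (T z) (T z) := hge₂ _
    have h2 : B₁ z z ≤ ‖z‖ ^ 2 := hle₁ z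
    nlinarith [norm_nonneg (T z), norm_nonneg z, hT z]
  refine ⟨T.toContinuousLinearEquiv, ?_, ?_⟩
  · apply ContinuousLinearMap.opNorm_le_bound _ zero_le_one
    intro z
    simpa using hcontr z
  · simpa using hTx
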